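/- Let R ⊆ S be a module-finite extension of noetherian commutative rings such that R is a unique factorization domain whose fraction field L has characteristic different from two. Suppose S is generated as an R-algebra by two elements s₁, s₂ ∈ S satisfying s₁² = a₁ and s₂² = a₂ for some a₁, a₂ ∈ R. Then the extension R ⊆ S splits. -/

import Mathlib

lemma key {L : Type*} [Field L] (two : (2:L) ≠ 0) (a₁ a₂ α β γ : L) :
    ∃ x y t H1 H2 H3 : L,
      H1 = α + x*(a₁-α^2) + y*(γ-α*β) + t*(a₁*β-α*γ) ∧
      H2 = β + x*(γ-α*β) + y*(a₂-β^2) + t*(a₂*α-β*γ) ∧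
      H3 = γ + x*(a₁*β-α*γ) + y*(a₂*α-β*γ) + t*(a₁*a₂-γ^2) ∧
      (H1 = 0 ∨ H1^2 = a₁) ∧ (H2 = 0 ∨ H2^2 = a₂) ∧ (H3 = 0 ∨ H3^2 = a₁*a₂) := by
  obtain ⟨p, hp⟩ : ∃ p, p = a₁ - α^2 := ⟨_, rfl⟩
  obtain ⟨q, hq⟩ : ∃ q, q = a₂ - β^2 := ⟨_, rfl⟩
  obtain ⟨r, hr⟩ : ∃ r, r = γ - α*β := ⟨_, rfl⟩
  obtain ⟨u, hu⟩ : ∃ u, u = a₁*β - α*γ := ⟨_, rfl⟩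
  obtain ⟨w, hw⟩ : ∃ w, w = a₂*α - β*γ := ⟨_, rfl⟩
  obtain ⟨z, hz⟩ : ∃ z, z = a₁*a₂ - γ^2 := ⟨_, rfl⟩
  by_cases hD : (p*q - r^2)^2 + 4*r*u*w ≠ 0
  · -- Cramer: full solve
    refine ⟨-(α*(q*z-w*w) + β*(u*w-r*z) + γ*(r*w-q*u))/((p*q-r^2)^2 + 4*r*u*w),
            -(α*(u*w-r*z) + β*(p*z-u*u) + γ*(r*u-p*w))/((p*q-r^2)^2 + 4*r*u*w),
            -(α*(r*w-q*u) + β*(r*u-p*w) + γ*(p*q-r*r))/((p*q-r^2)^2 + 4*r*u*w),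
            0, 0, 0, ?_, ?_, ?_, Or.inl rfl, Or.inl rfl, Or.inl rfl⟩ <;>
      generalize hDD : (p*q-r^2)^2 + 4*r*u*w = D at hD ⊢ <;> field_simp <;> subst hDD hp hq hr hu hw hz <;> ring
  · push_neg at hD
    by_cases hΔ : p*q - r^2 ≠ 0
    · -- rank-2 case: H3² = a₁a₂
      refine ⟨-(q*α-r*β)/(p*q-r^2), -(p*β-r*α)/(p*q-r^2), 0,
        0, 0, γ + (-(q*α-r*β)/(p*q-r^2))*(a₁*β-α*γ) + (-(p*β-r*α)/(p*q-r^2))*(a₂*α-β*γ) + 0*(a₁*a₂-γ^2),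
        ?_, ?_, rfl, Or.inl rfl, Or.inl rfl, Or.inr ?_⟩
      · generalize hDD : p*q-r^2 = D at hΔ ⊢; field_simp; subst hDD hp hq hr hu hw hz; ring
      · generalize hDD : p*q-r^2 = D at hΔ ⊢; field_simp; subst hDD hp hq hr hu hw hz; ring
      · generalize hDD : p*q-r^2 = D at hΔ hD ⊢
        field_simp
        subst hDD hp hq hr hu hw hz
        linear_combination (-(a₁*a₂ - γ^2)) * hD
    · push_neg at hΔ
      subst hp hq hr hu hw hz
      by_cases hp0 : a₁ - α^2 = 0
      · -- p = 0 branch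
        have e1 : a₁ = α^2 := by linear_combination hp0
        subst e1
        have e2 : γ = α*β := by
          have h2 : (γ - α*β)^2 = 0 := by linear_combination (a₂-β^2)*hp0 - hΔ
          have := pow_eq_zero_iff (n := 2) (by norm_num) |>.mp h2
          linear_combination this
        subst e2
        by_cases hq0 : a₂ - β^2 = 0
        · have e3 : a₂ = β^2 := by linear_combination hq0
          subst e3
          exact ⟨0,0,0, α, β, α*β, by ring, by ring, by ring,
            Or.inr (by ring), Or.inr (by ring), Or.inr (by ring)⟩
        · by_cases hqz : (a₂-β^2)*(α^2*a₂-(α*β)^2) - (a₂*α-β*(α*β))^2 = 0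
          · refine ⟨0, -β/(a₂-β^2), 0, α, 0, 0, by ring, ?_, ?_,
              Or.inr (by ring), Or.inl rfl, Or.inl rfl⟩
            · field_simp
              ring
            · field_simp
              ring
          · refine ⟨0, (α*β*(a₂*α-β*(α*β)) - β*(α^2*a₂-(α*β)^2))/((a₂-β^2)*(α^2*a₂-(α*β)^2) - (a₂*α-β*(α*β))^2),
              (β*(a₂*α-β*(α*β)) - α*β*(a₂-β^2))/((a₂-β^2)*(α^2*a₂-(α*β)^2) - (a₂*α-β*(α*β))^2),
              α, 0, 0, by ring, ?_, ?_,
              Or.inr (by ring), Or.inl rfl, Or.inl rfl⟩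
            · field_simp
              exact absurd (by ring) hqz
            · field_simp
              exact absurd (by ring) hqz
      · -- p ≠ 0 branch
        have hru : (γ-α*β)*(a₁*β-α*γ) = 0 := by
          have h4 : (2*((γ-α*β)*(a₁*β-α*γ)))^2 = 0 := by
            linear_combination ((a₁-α^2)*((a₁-α^2)*(a₂-β^2) - (γ-α*β)^2)
              + 4*(γ-α*β)*(a₁*β-α*γ)*α) * hΔ - (a₁-α^2) * hD
          have h5 := pow_eq_zero_iff (n := 2) (by norm_num) |>.mp h4
          rcases mul_eq_zero.mp h5 with h | h
          · exact absurd h two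
          · exact h
        by_cases hu0 : a₁*β - α*γ = 0
        · -- u = 0 (then w = 0 effectively)
          by_cases hz0 : a₁*a₂ - γ^2 = 0
          · refine ⟨-α/(a₁-α^2), 0, 0, 0, 0, γ, ?_, ?_, ?_,
              Or.inl rfl, Or.inl rfl, Or.inr (by linear_combination -hz0)⟩
            · field_simp
              ring
            · field_simp
              linear_combination -hu0
            · field_simp
              linear_combination α*hu0
          · refine ⟨-α/(a₁-α^2), 0, -γ/(a₁*a₂-γ^2), 0, 0, 0, ?_, ?_, ?_,
              Or.inl rfl, Or.inl rfl, Or.inl rfl⟩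
            · field_simp
              linear_combination (-α*(a₁*a₂-γ^2))*hu0 - γ*(a₁-α^2)*hu0 + (a₁*a₂*α + a₁*γ - α^2*γ - α*γ^2 + γ)*hu0
            · field_simp
              linear_combination (-(a₁*a₂-γ^2))*hu0 - γ*(a₁-α^2)*hu0 + (a₁*γ - α^2*γ - α*β*γ - a₁*a₂ + a₁*β^2 + a₂*α^2)*hu0 + (a₁*β)*hΔ
            · field_simp
              linear_combination -α*(a₁*a₂-γ^2)*hu0 + (2*a₁*a₂*α - 2*α*γ^2)*hu0 + (-α*(a₁*a₂-1-γ^2))*hu0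
        · -- u ≠ 0, so r = 0
          have hr0 : γ - α*β = 0 := by
            rcases mul_eq_zero.mp hru with h | h
            · exact h
            · exact absurd h hu0
          have e2 : γ = α*β := by linear_combination hr0
          subst e2
          have hq0 : a₂ - β^2 = 0 := by
            have hpq : (a₁-α^2)*(a₂-β^2) = 0 := by linear_combination hΔ
            rcases mul_eq_zero.mp hpq with h | h
            · exact absurd h hp0
            · exact h
          have e3 : a₂ = β^2 := by linear_combination hq0
          subst e3
          by_cases hpz : (a₁-α^2)*(a₁*β^2-(α*β)^2) - (a₁*β-α*(α*β))^2 = 0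
          · refine ⟨-α/(a₁-α^2), 0, 0, 0, β, 0, ?_, by ring, ?_,
              Or.inl rfl, Or.inr (by ring), Or.inl rfl⟩
            · field_simp
              ring
            · field_simp
              ring
          · refine ⟨(α*β*(a₁*β-α*(α*β)) - α*(a₁*β^2-(α*β)^2))/((a₁-α^2)*(a₁*β^2-(α*β)^2) - (a₁*β-α*(α*β))^2),
              0,
              (α*(a₁*β-α*(α*β)) - α*β*(a₁-α^2))/((a₁-α^2)*(a₁*β^2-(α*β)^2) - (a₁*β-α*(α*β))^2),
              0, β, 0, ?_, by ring, ?_,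
              Or.inl rfl, Or.inr (by ring), Or.inl rfl⟩
            · field_simp
              exact absurd (by ring) hpz
            · field_simp
              exact absurd (by ring) hpz

set_option maxHeartbeats 1000000 in
theorem stmt5 (R S : Type) [CommRing R] [IsDomain R] [UniqueFactorizationMonoid R]
    [IsNoetherianRing R] [CommRing S] [IsNoetherianRing S]
    [Algebra R S] (hinj : Function.Injective (algebraMap R S))
    [Module.Finite R S]
    (hchar : ringChar (FractionRing R) ≠ 2)
    (s₁ s₂ : S) (hgen : Algebra.adjoin R {s₁, s₂} = ⊤)
    (a₁ a₂ : R)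
    (h₁ : s₁ ^ 2 = algebraMap R S a₁) (h₂ : s₂ ^ 2 = algebraMap R S a₂) :
    ∃ ρ : S →ₗ[R] R, ρ 1 = 1 := by
  classical
  -- (2 : FractionRing R) ≠ 0
  have two : (2 : FractionRing R) ≠ 0 := by
    intro h0
    haveI := ringChar.charP (FractionRing R)
    have hd : ringChar (FractionRing R) ∣ 2 := by
      have := (CharP.cast_eq_zero_iff (FractionRing R) (ringChar (FractionRing R)) 2).mp
      exact this (by exact_mod_cast h0)
    rcases CharP.char_is_prime_or_zero (FractionRing R) (ringChar (FractionRing R)) with hp | hp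
    · rcases (Nat.prime_dvd_prime_iff_eq hp Nat.prime_two).mp hd with h
      exact hchar h
    · rw [hp] at hd; norm_num at hd
  -- Step 1: S is spanned by 1, s₁, s₂, s₁*s₂
  set M : Submodule R S := Submodule.span R {1, s₁, s₂, s₁*s₂} with hM
  have h1M : (1:S) ∈ M := Submodule.subset_span (by simp)
  have hs1M : s₁ ∈ M := Submodule.subset_span (by simp)
  have hs2M : s₂ ∈ M := Submodule.subset_span (by simp)
  have hs12M : s₁*s₂ ∈ M := Submodule.subset_span (by simp)
  have halg : ∀ r : R, algebraMap R S r ∈ M := fun r => by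
    rw [Algebra.algebraMap_eq_smul_one]; exact M.smul_mem r h1M
  have hgmul : ∀ x ∈ ({1, s₁, s₂, s₁*s₂} : Set S), ∀ y ∈ ({1, s₁, s₂, s₁*s₂} : Set S),
      x*y ∈ M := by
    have e1 : s₁*s₁ = algebraMap R S a₁ := by rw [← h₁]; ring
    have e2 : s₂*s₂ = algebraMap R S a₂ := by rw [← h₂]; ring
    intro x hx y hy
    simp only [Set.mem_insert_iff, Set.mem_singleton_iff] at hx hy
    have sm : ∀ (c : R) (z : S), z ∈ M → algebraMap R S c * z ∈ M := fun c z hz => by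
      rw [← Algebra.smul_def]; exact M.smul_mem c hz
    rcases hx with h|h|h|h <;> rcases hy with h'|h'|h'|h' <;> rw [h, h']
    · simpa using h1M
    · simpa using hs1M
    · simpa using hs2M
    · simpa using hs12M
    · simpa using hs1M
    · rw [e1]; exact halg a₁
    · exact hs12M
    · rw [show s₁*(s₁*s₂) = (s₁*s₁)*s₂ by ring, e1]; exact sm a₁ s₂ hs2M
    · simpa using hs2M
    · rw [show s₂*s₁ = s₁*s₂ by ring]; exact hs12M
    · rw [e2]; exact halg a₂
    · rw [show s₂*(s₁*s₂) = (s₂*s₂)*s₁ by ring, e2]; exact sm a₂ s₁ hs1M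
    · simpa using hs12M
    · rw [show s₁*s₂*s₁ = (s₁*s₁)*s₂ by ring, e1]; exact sm a₁ s₂ hs2M
    · rw [show s₁*s₂*s₂ = (s₂*s₂)*s₁ by ring, e2]; exact sm a₂ s₁ hs1M
    · rw [show s₁*s₂*(s₁*s₂) = (s₁*s₁)*(s₂*s₂) by ring, e1, e2, ← map_mul]
      exact halg (a₁*a₂)
  have hmulM : ∀ x ∈ M, ∀ y ∈ M, x*y ∈ M := by
    intro x hx
    refine Submodule.span_induction ?_ ?_ ?_ ?_ hx
    · intro g hg y hy
      refine Submodule.span_induction ?_ ?_ ?_ ?_ hy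
      · intro g' hg'; exact hgmul g hg g' hg'
      · simpa using M.zero_mem
      · intro z w _ _ hz hw; rw [mul_add]; exact M.add_mem hz hw
      · intro c z _ hz; rw [mul_smul_comm]; exact M.smul_mem c hz
    · intro y _; simpa using M.zero_mem
    · intro z w _ _ hz hw y hy; rw [add_mul]; exact M.add_mem (hz y hy) (hw y hy)
    · intro c z _ hz y hy; rw [smul_mul_assoc]; exact M.smul_mem c (hz y hy)
  have hsp : ∀ s : S, s ∈ M := by
    intro s
    have hs : s ∈ Algebra.adjoin R {s₁, s₂} := by rw [hgen]; trivial
    refine Algebra.adjoin_induction ?_ ?_ ?_ ?_ hs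
    · intro x hx
      rcases hx with rfl | hx
      · exact hs1M
      · rw [Set.mem_singleton_iff] at hx; subst hx; exact hs2M
    · exact halg
    · intro x y _ _ hx hy; exact M.add_mem hx hy
    · intro x y _ _ hx hy; exact hmulM x hx y hy
  -- Step 2: the surjection π : R⁴ → S
  let π : (Fin 4 → R) →ₗ[R] S :=
    { toFun := fun v => v 0 • (1:S) + v 1 • s₁ + v 2 • s₂ + v 3 • (s₁*s₂)
      map_add' := by
        intro v w
        simp only [Pi.add_apply, add_smul]
        abel
      map_smul' := by
        intro c v
        simp only [Pi.smul_apply, smul_eq_mul, RingHom.id_apply, mul_smul, smul_add] }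
  have hπs : Function.Surjective π := by
    intro s
    have hrange : M ≤ LinearMap.range π := by
      rw [hM, Submodule.span_le]
      rintro x (rfl | rfl | rfl | h)
      · exact ⟨![1,0,0,0], by simp [π]⟩
      · exact ⟨![0,1,0,0], by simp [π]⟩
      · exact ⟨![0,0,1,0], by simp [π]⟩
      · rw [Set.mem_singleton_iff] at h; subst h
        exact ⟨![0,0,0,1], by simp [π]⟩
    exact hrange (hsp s)
  have hπe₀ : π ![1,0,0,0] = 1 := by simp [π]
  -- Step 3: J = preimage of the torsion submodule
  set J : Submodule R (Fin 4 → R) := (Submodule.torsion R S).comap π with hJ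
  have hJ0 : ∀ v : Fin 4 → R, π v = 0 → v ∈ J := by
    intro v hv
    simp only [hJ, Submodule.mem_comap, hv]
    exact (Submodule.torsion R S).zero_mem
  have hJx : ∀ v ∈ J, (![a₁ * v 1, v 0, a₁ * v 3, v 2]) ∈ J := by
    intro v hv
    have hπ : π (![a₁ * v 1, v 0, a₁ * v 3, v 2]) = s₁ * π v := by
      show (a₁ * v 1) • (1:S) + (v 0) • s₁ + (a₁ * v 3) • s₂ + (v 2) • (s₁*s₂)
          = s₁ * ((v 0) • (1:S) + (v 1) • s₁ + (v 2) • s₂ + (v 3) • (s₁*s₂))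
      simp only [Algebra.smul_def, map_mul]
      linear_combination (algebraMap R S (v 1) + algebraMap R S (v 3) * s₂) * h₁.symm
    simp only [hJ, Submodule.mem_comap] at hv ⊢
    rw [hπ]
    obtain ⟨c, hc⟩ := (Submodule.mem_torsion_iff _).mp hv
    exact (Submodule.mem_torsion_iff _).mpr ⟨c, by rw [Submonoid.smul_def] at hc ⊢; rw [← mul_smul_comm, hc, mul_zero]⟩
  have hJy : ∀ v ∈ J, (![a₂ * v 2, a₂ * v 3, v 0, v 1]) ∈ J := by
    intro v hv
    have hπ : π (![a₂ * v 2, a₂ * v 3, v 0, v 1]) = s₂ * π v := by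
      show (a₂ * v 2) • (1:S) + (a₂ * v 3) • s₁ + (v 0) • s₂ + (v 1) • (s₁*s₂)
          = s₂ * ((v 0) • (1:S) + (v 1) • s₁ + (v 2) • s₂ + (v 3) • (s₁*s₂))
      simp only [Algebra.smul_def, map_mul]
      linear_combination (algebraMap R S (v 2) + algebraMap R S (v 3) * s₁) * h₂.symm
    simp only [hJ, Submodule.mem_comap] at hv ⊢
    rw [hπ]
    obtain ⟨c, hc⟩ := (Submodule.mem_torsion_iff _).mp hv
    exact (Submodule.mem_torsion_iff _).mpr ⟨c, by rw [Submonoid.smul_def] at hc ⊢; rw [← mul_smul_comm, hc, mul_zero]⟩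
  -- Step 4: pass to the fraction field
  set F : R →+* FractionRing R := algebraMap R (FractionRing R) with hFdef
  have hF : Function.Injective F := IsFractionRing.injective R (FractionRing R)
  let fmap : (Fin 4 → R) →ₗ[R] (Fin 4 → FractionRing R) :=
    { toFun := fun v i => F (v i)
      map_add' := by intro v w; funext i; simp
      map_smul' := by intro c v; funext i; simp [Algebra.smul_def, hFdef] }
  have hfmap : ∀ (v : Fin 4 → R) (i : Fin 4), fmap v i = F (v i) := fun v i => rfl
  set JL : Submodule (FractionRing R) (Fin 4 → FractionRing R) :=
    Submodule.span (FractionRing R) (fmap '' (J : Set (Fin 4 → R))) with hJL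
  have hnm : (fmap ![1,0,0,0]) ∉ JL := by
    intro hmem
    rw [hJL, Submodule.mem_span_set'] at hmem
    obtain ⟨n, cf, g, hsum⟩ := hmem
    have hpre : ∀ i : Fin n, ∃ v : Fin 4 → R, v ∈ J ∧ fmap v = (g i : Fin 4 → FractionRing R) := by
      intro i
      obtain ⟨v, hv, hveq⟩ := (g i).2
      exact ⟨v, hv, hveq⟩
    choose vv hvvJ hvveq using hpre
    obtain ⟨b, hb⟩ := IsLocalization.exist_integer_multiples (nonZeroDivisors R) Finset.univ cf
    have hrr : ∀ i : Fin n, ∃ r : R, F r = F (b:R) * cf i := by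
      intro i
      obtain ⟨r, hr⟩ := hb i (Finset.mem_univ i)
      exact ⟨r, by rw [hr, Algebra.smul_def]⟩
    choose rr hrrs using hrr
    have hbe : (b : R) • (![1,0,0,0] : Fin 4 → R) ∈ J := by
      have heq : (b : R) • (![1,0,0,0] : Fin 4 → R) = ∑ i, rr i • vv i := by
        funext j
        apply hF
        have e2 : F ((∑ i, rr i • vv i) j) = ∑ i, (F (b:R) * cf i) * F (vv i j) := by
          rw [Finset.sum_apply]
          rw [map_sum]
          refine Finset.sum_congr rfl fun i _ => ?_
          rw [Pi.smul_apply, smul_eq_mul, map_mul, hrrs i]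
        have e3 : fmap ![1,0,0,0] j = ∑ i, cf i * F (vv i j) := by
          rw [← hsum, Finset.sum_apply]
          refine Finset.sum_congr rfl fun i _ => ?_
          rw [Pi.smul_apply, smul_eq_mul]
          congr 1
          rw [← hvveq i]
          exact hfmap (vv i) j
        rw [e2]
        rw [Pi.smul_apply, smul_eq_mul, map_mul]
        rw [← hfmap ![1,0,0,0] j, e3, Finset.mul_sum]
        refine Finset.sum_congr rfl fun i _ => by ring
      rw [heq]
      exact Submodule.sum_mem _ fun i _ => J.smul_mem _ (hvvJ i)
    have htor : π ((b : R) • (![1,0,0,0] : Fin 4 → R)) ∈ Submodule.torsion R S := hbe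
    rw [map_smul, hπe₀] at htor
    obtain ⟨c, hc⟩ := (Submodule.mem_torsion_iff _).mp htor
    rw [Submonoid.smul_def, smul_smul, Algebra.smul_def, mul_one] at hc
    have : (c : R) * (b : R) = 0 := hinj (by rw [hc, map_zero])
    rcases mul_eq_zero.mp this with h | h
    · exact nonZeroDivisors.coe_ne_zero c h
    · exact nonZeroDivisors.coe_ne_zero b h
  -- Step 5: a functional vanishing on J with leading coefficient 1
  obtain ⟨φ₀, hφ₀ne, hφ₀bot⟩ := Submodule.exists_dual_map_eq_bot_of_notMem hnm inferInstance
  set ψ : Module.Dual (FractionRing R) (Fin 4 → FractionRing R) :=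
    (φ₀ (fmap ![1,0,0,0]))⁻¹ • φ₀ with hψdef
  have hψJ : ∀ v ∈ J, ψ (fmap v) = 0 := by
    intro v hv
    have hm : fmap v ∈ JL := Submodule.subset_span ⟨v, hv, rfl⟩
    have : φ₀ (fmap v) ∈ JL.map φ₀ := Submodule.mem_map_of_mem hm
    rw [hφ₀bot, Submodule.mem_bot] at this
    simp [hψdef, this]
  have hψe : ψ (fmap ![1,0,0,0]) = 1 := by
    simp only [hψdef, LinearMap.smul_apply, smul_eq_mul]
    exact inv_mul_cancel₀ hφ₀ne
  -- Step 6: expand ψ in coordinates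
  have hdecomp : ∀ x : Fin 4 → FractionRing R,
      x = x 0 • Pi.single 0 1 + x 1 • Pi.single 1 1 + x 2 • Pi.single 2 1 + x 3 • Pi.single 3 1 := by
    intro x; funext j; fin_cases j <;> simp [Pi.single_apply]
  have hψx : ∀ x : Fin 4 → FractionRing R,
      ψ x = x 0 * ψ (Pi.single 0 1) + x 1 * ψ (Pi.single 1 1)
        + x 2 * ψ (Pi.single 2 1) + x 3 * ψ (Pi.single 3 1) := by
    intro x
    conv_lhs => rw [hdecomp x]
    simp [map_add, map_smul, smul_eq_mul]
  have hsingle0 : (fmap ![1,0,0,0]) = Pi.single 0 1 := by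
    funext j
    rw [hfmap]
    fin_cases j <;> simp
  have hψ0 : ψ (Pi.single 0 1) = 1 := by rw [← hsingle0]; exact hψe
  set α := ψ (Pi.single 1 1) with hα
  set β := ψ (Pi.single 2 1) with hβ
  set γ := ψ (Pi.single 3 1) with hγ
  have hP0 : ∀ v ∈ J, 1 * F (v 0) + α * F (v 1) + β * F (v 2) + γ * F (v 3) = 0 := by
    intro v hv
    have hv' := hψJ v hv
    rw [hψx (fmap v)] at hv'
    rw [hfmap, hfmap, hfmap, hfmap, hψ0] at hv'
    linear_combination hv'
  -- Step 7: stability of the orthogonality relations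
  have hT : ∀ c0 c1 c2 c3 : FractionRing R,
      (∀ v ∈ J, c0 * F (v 0) + c1 * F (v 1) + c2 * F (v 2) + c3 * F (v 3) = 0) →
      (∀ v ∈ J, c1 * F (v 0) + (F a₁ * c0) * F (v 1) + c3 * F (v 2) + (F a₁ * c2) * F (v 3) = 0) := by
    intro c0 c1 c2 c3 h v hv
    have h2 := h _ (hJx v hv)
    simp only [Matrix.cons_val_zero, Matrix.cons_val_one, Matrix.head_cons,
      Matrix.cons_val_two, Matrix.tail_cons, Matrix.cons_val_three, map_mul] at h2
    linear_combination h2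
  have hU : ∀ c0 c1 c2 c3 : FractionRing R,
      (∀ v ∈ J, c0 * F (v 0) + c1 * F (v 1) + c2 * F (v 2) + c3 * F (v 3) = 0) →
      (∀ v ∈ J, c2 * F (v 0) + c3 * F (v 1) + (F a₂ * c0) * F (v 2) + (F a₂ * c1) * F (v 3) = 0) := by
    intro c0 c1 c2 c3 h v hv
    have h2 := h _ (hJy v hv)
    simp only [Matrix.cons_val_zero, Matrix.cons_val_one, Matrix.head_cons,
      Matrix.cons_val_two, Matrix.tail_cons, Matrix.cons_val_three, map_mul] at h2
    linear_combination h2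
  have hP1 := hT 1 α β γ hP0
  have hP2 := hU 1 α β γ hP0
  have hP3 := hT β γ (F a₂ * 1) (F a₂ * α) hP2
  -- Step 8: apply the key lemma
  obtain ⟨x, y, t, H1, H2, H3, hH1, hH2, hH3, d1, d2, d3⟩ := key two (F a₁) (F a₂) α β γ
  have hfinal : ∀ v ∈ J, F (v 0) + H1 * F (v 1) + H2 * F (v 2) + H3 * F (v 3) = 0 := by
    intro v hv
    linear_combination (1 - x*α - y*β - t*γ) * hP0 v hv + x * hP1 v hv + y * hP2 v hv
      + t * hP3 v hv + F (v 1) * hH1 + F (v 2) * hH2 + F (v 3) * hH3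
  -- Step 9: the coefficients are integral, hence in R
  have hex : ∀ (HH : FractionRing R) (cR : R), (HH = 0 ∨ HH^2 = F cR) → ∃ A : R, F A = HH := by
    intro HH cR hd
    rcases hd with h|h
    · exact ⟨0, by simp [h]⟩
    · refine IsIntegrallyClosed.isIntegral_iff.mp ?_
      refine ⟨Polynomial.X^2 - Polynomial.C cR, ?_, ?_⟩
      · exact Polynomial.monic_X_pow_sub_C cR (by norm_num)
      · simp only [Polynomial.eval₂_sub, Polynomial.eval₂_pow, Polynomial.eval₂_X,
          Polynomial.eval₂_C, h]
        rw [hFdef] at h ⊢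
        rw [← h]
        ring
  obtain ⟨A1, hA1⟩ := hex H1 a₁ d1
  obtain ⟨A2, hA2⟩ := hex H2 a₂ d2
  have d3' : H3 = 0 ∨ H3^2 = F (a₁*a₂) := by
    rcases d3 with h|h
    · exact Or.inl h
    · exact Or.inr (by rw [h, map_mul])
  obtain ⟨A3, hA3⟩ := hex H3 (a₁*a₂) d3'
  -- Step 10: the retraction
  let φR : (Fin 4 → R) →ₗ[R] R :=
    { toFun := fun v => v 0 + A1 * v 1 + A2 * v 2 + A3 * v 3
      map_add' := by intro v w; simp only [Pi.add_apply]; ring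
      map_smul' := by intro c v; simp only [Pi.smul_apply, smul_eq_mul, RingHom.id_apply]; ring }
  have hkerφ : ∀ v : Fin 4 → R, π v = 0 → φR v = 0 := by
    intro v hv
    have hvJ : v ∈ J := hJ0 v hv
    apply hF
    have : F (φR v) = F (v 0) + H1 * F (v 1) + H2 * F (v 2) + H3 * F (v 3) := by
      show F (v 0 + A1 * v 1 + A2 * v 2 + A3 * v 3) = _
      rw [map_add, map_add, map_add, map_mul, map_mul, map_mul, hA1, hA2, hA3]
    rw [this, hfinal v hvJ, map_zero]
  choose sec hsec using hπs
  have hdiff : ∀ v w : Fin 4 → R, π v = π w → φR v = φR w := by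
    intro v w h
    have h0 : φR (v - w) = 0 := hkerφ _ (by rw [map_sub, h, sub_self])
    rw [map_sub] at h0
    exact sub_eq_zero.mp h0
  refine ⟨{ toFun := fun s => φR (sec s)
            map_add' := ?_
            map_smul' := ?_ }, ?_⟩
  · intro s t
    show φR (sec (s + t)) = φR (sec s) + φR (sec t)
    have : φR (sec (s + t)) = φR (sec s + sec t) := by
      apply hdiff
      rw [map_add, hsec, hsec, hsec]
    rw [this, map_add]
  · intro c s
    show φR (sec (c • s)) = c • φR (sec s)
    have : φR (sec (c • s)) = φR (c • sec s) := by
      apply hdiff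
      rw [map_smul, hsec, hsec]
    rw [this, map_smul]
  · show φR (sec 1) = 1
    have : φR (sec 1) = φR ![1,0,0,0] := by
      apply hdiff
      rw [hsec, hπe₀]
    rw [this]
    show (1:R) + A1 * 0 + A2 * 0 + A3 * 0 = 1
    ring
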